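/- Let Ω ⊆ ℝⁿ be open, n ≥ 2. For a Borel function g : ∂Ω → ℝ define Tg(x) = ∫_{S^{n−1}} |g(ζ(x,θ))| dH^{n−1}(θ), where ζ(x,θ) is the first intersection of the ray from x in direction θ with ∂Ω (with the convention g(ζ(x,θ)) = 0 if the ray never meets ∂Ω). Then Tg(x) ≤ 2ⁿ ∫_{∂Ω} |g(y)|/|x−y|^{n−1} dH^{n−1}(y) for a.e. x ∈ Ω. -/

import Mathlib

open Set MeasureTheory
open scoped ENNReal NNReal

private lemma dw_aux11 {a b c r : ℝ} (ha : r ≤ a) (hb : r ≤ b) (hr : 0 < r)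
    (h1 : c ≤ a * b) (h2 : -(a * b) ≤ c) :
    r ^ 2 * (2 * (a * b) - 2 * c) ≤ a * b * (a ^ 2 - 2 * c + b ^ 2) := by
  have ha' : 0 < a := lt_of_lt_of_le hr ha
  have hb' : 0 < b := lt_of_lt_of_le hr hb
  have h3 : r ^ 2 ≤ ((a + b) / 2) ^ 2 := by nlinarith
  have h4 : 0 ≤ 2 * (a * b) - 2 * c := by linarith
  have h5 : 0 ≤ (a - b) ^ 2 * (a * b + c) := mul_nonneg (sq_nonneg _) (by linarith)
  nlinarith [mul_le_mul_of_nonneg_right h3 h4]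

private lemma dw_lip11 {n : ℕ} {r : ℝ} (hr : 0 < r) :
    LipschitzOnWith (⟨r⁻¹, by positivity⟩ : ℝ≥0)
      (fun u : EuclideanSpace ℝ (Fin n) => ‖u‖⁻¹ • u) {u | r ≤ ‖u‖} := by
  apply LipschitzOnWith.of_dist_le_mul
  intro u hu v hv
  simp only [mem_setOf_eq] at hu hv
  have ha : 0 < ‖u‖ := lt_of_lt_of_le hr hu
  have hb : 0 < ‖v‖ := lt_of_lt_of_le hr hv
  rw [dist_eq_norm, dist_eq_norm]
  have hc1 : (inner ℝ u v) ≤ ‖u‖ * ‖v‖ := real_inner_le_norm u v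
  have hc2 : -(‖u‖ * ‖v‖) ≤ (inner ℝ u v) := neg_le_of_abs_le (abs_real_inner_le_norm u v)
  have key : ‖‖u‖⁻¹ • u - ‖v‖⁻¹ • v‖ ^ 2 ≤ (r⁻¹ * ‖u - v‖) ^ 2 := by
    rw [mul_pow, norm_sub_sq_real, norm_sub_sq_real, real_inner_smul_left, real_inner_smul_right,
      norm_smul, norm_smul, norm_inv, norm_norm, norm_inv, norm_norm, mul_pow, mul_pow]
    set a := ‖u‖; set b := ‖v‖; set c := (inner ℝ u v)
    have hK : (0:ℝ) < a * b * r ^ 2 := by positivity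
    rw [← mul_le_mul_iff_of_pos_right hK]
    have e1 : (a⁻¹ ^ 2 * a ^ 2 - 2 * (a⁻¹ * (b⁻¹ * c)) + b⁻¹ ^ 2 * b ^ 2) * (a * b * r ^ 2)
        = r ^ 2 * (2 * (a * b) - 2 * c) := by field_simp; ring
    have e2 : (r⁻¹ ^ 2 * (a ^ 2 - 2 * c + b ^ 2)) * (a * b * r ^ 2)
        = a * b * (a ^ 2 - 2 * c + b ^ 2) := by field_simp
    rw [e1, e2]
    exact dw_aux11 hu hv hr hc1 hc2
  have h1 : (0:ℝ) ≤ r⁻¹ * ‖u - v‖ := by positivity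
  calc ‖‖u‖⁻¹ • u - ‖v‖⁻¹ • v‖ = Real.sqrt (‖‖u‖⁻¹ • u - ‖v‖⁻¹ • v‖ ^ 2) :=
        (Real.sqrt_sq (norm_nonneg _)).symm
    _ ≤ Real.sqrt ((r⁻¹ * ‖u - v‖) ^ 2) := Real.sqrt_le_sqrt key
    _ = r⁻¹ * ‖u - v‖ := Real.sqrt_sq h1
    _ = _ := rfl

private lemma proj_bound11 {n : ℕ} (hn : 2 ≤ n) (x : EuclideanSpace ℝ (Fin n))
    (E : Set (EuclideanSpace ℝ (Fin n))) (hE : MeasurableSet E) (hx : x ∉ E) :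
    μH[(n:ℝ)-1] ((fun y => ‖y - x‖⁻¹ • (y - x)) '' E)
      ≤ 2 ^ n * ∫⁻ y in E, edist x y ^ (-((n:ℝ)-1))
          ∂(μH[(n:ℝ)-1] : Measure (EuclideanSpace ℝ (Fin n))) := by
  set d : ℝ := (n:ℝ) - 1 with hd_def
  have hd : 0 ≤ d := by
    have : (2:ℝ) ≤ (n:ℝ) := by exact_mod_cast hn
    simp only [hd_def]; linarith
  set μ : Measure (EuclideanSpace ℝ (Fin n)) := μH[(n:ℝ)-1] with hμ
  set P : EuclideanSpace ℝ (Fin n) → EuclideanSpace ℝ (Fin n) := fun y => ‖y - x‖⁻¹ • (y - x)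
    with hP
  set w : EuclideanSpace ℝ (Fin n) → ℝ≥0∞ := fun y => edist x y ^ (-d) with hw
  set A : ℤ → Set (EuclideanSpace ℝ (Fin n)) :=
    fun k => {y | ‖y - x‖ ∈ Ico ((2:ℝ)^k) ((2:ℝ)^(k+1))} with hA
  have hAm : ∀ k, MeasurableSet (A k) := by
    intro k
    exact ((continuous_id.sub continuous_const).norm).measurable measurableSet_Ico
  have hdisj : Pairwise (Function.onFun Disjoint fun k => E ∩ A k) := by
    intro j k hjk
    simp only [Function.onFun, disjoint_left]
    rintro y ⟨-, hyj⟩ ⟨-, hyk⟩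
    rcases lt_or_gt_of_ne hjk with hl | hl
    · have h1 : (2:ℝ)^(j+1) ≤ (2:ℝ)^k := zpow_le_zpow_right₀ (by norm_num) (by omega)
      exact absurd (hyj.2.trans_le (h1.trans hyk.1)) (lt_irrefl _)
    · have h1 : (2:ℝ)^(k+1) ≤ (2:ℝ)^j := zpow_le_zpow_right₀ (by norm_num) (by omega)
      exact absurd (hyk.2.trans_le (h1.trans hyj.1)) (lt_irrefl _)
  have hcover : E = ⋃ k, E ∩ A k := by
    ext y
    simp only [mem_iUnion, mem_inter_iff]
    constructor
    · intro hy
      have hy0 : 0 < ‖y - x‖ := by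
        rw [norm_pos_iff, sub_ne_zero]
        rintro rfl; exact hx hy
      obtain ⟨k, hk⟩ := exists_mem_Ico_zpow hy0 (by norm_num : (1:ℝ) < 2)
      exact ⟨k, hy, hk⟩
    · rintro ⟨k, hy, -⟩; exact hy
  have key : ∀ k : ℤ, μ (P '' (E ∩ A k)) ≤ 2 ^ n * ∫⁻ y in E ∩ A k, w y ∂μ := by
    intro k
    have h2k : (0:ℝ) < (2:ℝ)^k := zpow_pos (by norm_num) _
    have hKpos : (0:ℝ) ≤ ((2:ℝ)^k)⁻¹ := by positivity
    set K : ℝ≥0 := ⟨((2:ℝ)^k)⁻¹, hKpos⟩ with hKdef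
    have hKcoe : (K : ℝ≥0∞) = ENNReal.ofReal ((2:ℝ)^k)⁻¹ :=
      (ENNReal.ofReal_eq_coe_nnreal hKpos).symm
    have hlip : LipschitzOnWith K P (A k) := by
      have h1 : LipschitzOnWith (⟨((2:ℝ)^k)⁻¹, by positivity⟩ : ℝ≥0)
          (fun u : EuclideanSpace ℝ (Fin n) => ‖u‖⁻¹ • u) {u | (2:ℝ)^k ≤ ‖u‖} := dw_lip11 h2k
      have h2 : LipschitzWith 1 (fun y : EuclideanSpace ℝ (Fin n) => y - x) :=
        LipschitzWith.of_dist_le_mul (fun a b => by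
          rw [dist_eq_norm, dist_eq_norm]; simp [sub_sub_sub_cancel_right])
      have h3 := h1.comp (h2.lipschitzOnWith (s := A k)) (fun y hy => hy.1)
      convert h3 using 1
      · rw [hKdef]; exact (mul_one _).symm
      · rfl
    have himg' := (hlip.mono (inter_subset_right : E ∩ A k ⊆ A k)).hausdorffMeasure_image_le hd
    set c : ℝ≥0∞ := ENNReal.ofReal ((2:ℝ)^(k+1)) with hc
    have hc0 : c ≠ 0 := by
      simp only [hc, ne_eq, ENNReal.ofReal_eq_zero, not_le]
      positivity
    have hcT : c ≠ ∞ := ENNReal.ofReal_ne_top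
    have hwlb : ∀ y ∈ E ∩ A k, c ^ (-d) ≤ w y := by
      intro y hy
      have hed : edist x y ≤ c := by
        rw [edist_dist]
        exact ENNReal.ofReal_le_ofReal (by
          rw [dist_comm, dist_eq_norm]
          exact le_of_lt hy.2.2)
      simp only [hw, ENNReal.rpow_neg]
      exact ENNReal.inv_le_inv.2 (ENNReal.rpow_le_rpow hed hd)
    have hint : c ^ (-d) * μ (E ∩ A k) ≤ ∫⁻ y in E ∩ A k, w y ∂μ := by
      rw [← setLIntegral_const (E ∩ A k) (c ^ (-d))]
      exact setLIntegral_mono' (hE.inter (hAm k)) hwlb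
    have hμk : μ (E ∩ A k) ≤ c ^ d * ∫⁻ y in E ∩ A k, w y ∂μ := by
      have h1 := mul_le_mul_right hint (c ^ d)
      rwa [← mul_assoc, ← ENNReal.rpow_add d (-d) hc0 hcT, add_neg_cancel, ENNReal.rpow_zero,
        one_mul] at h1
    have hKc : (K : ℝ≥0∞) * c = 2 := by
      rw [hKcoe, hc, ← ENNReal.ofReal_mul (by positivity)]
      have : ((2:ℝ)^k)⁻¹ * (2:ℝ)^(k+1) = 2 := by
        rw [zpow_add_one₀ (two_ne_zero)]
        field_simp
      rw [this]
      norm_num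
    have h2d : (2:ℝ≥0∞) ^ d ≤ 2 ^ n := by
      rw [← ENNReal.rpow_natCast 2 n]
      refine ENNReal.rpow_le_rpow_of_exponent_le (by norm_num) ?_
      simp only [hd_def]; linarith
    calc μ (P '' (E ∩ A k))
        ≤ (K : ℝ≥0∞) ^ d * μ (E ∩ A k) := himg'
      _ ≤ (K : ℝ≥0∞) ^ d * (c ^ d * ∫⁻ y in E ∩ A k, w y ∂μ) :=
          mul_le_mul_right hμk _
      _ = ((K : ℝ≥0∞) * c) ^ d * ∫⁻ y in E ∩ A k, w y ∂μ := by
          rw [ENNReal.mul_rpow_of_nonneg _ _ hd, mul_assoc]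
      _ = (2:ℝ≥0∞) ^ d * ∫⁻ y in E ∩ A k, w y ∂μ := by rw [hKc]
      _ ≤ 2 ^ n * ∫⁻ y in E ∩ A k, w y ∂μ := mul_le_mul_left h2d _
  have h1 : P '' E ⊆ ⋃ k, P '' (E ∩ A k) := by
    rw [← image_iUnion, ← hcover]
  calc μ (P '' E) ≤ μ (⋃ k, P '' (E ∩ A k)) := measure_mono h1
    _ ≤ ∑' k : ℤ, μ (P '' (E ∩ A k)) := measure_iUnion_le _
    _ ≤ ∑' k : ℤ, 2 ^ n * ∫⁻ y in E ∩ A k, w y ∂μ := ENNReal.tsum_le_tsum key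
    _ = 2 ^ n * ∑' k : ℤ, ∫⁻ y in E ∩ A k, w y ∂μ := ENNReal.tsum_mul_left
    _ = 2 ^ n * ∫⁻ y in ⋃ k, E ∩ A k, w y ∂μ := by
        rw [lintegral_iUnion (fun k => hE.inter (hAm k)) hdisj]
    _ = 2 ^ n * ∫⁻ y in E, w y ∂μ := by rw [← hcover]

/-- For any open Ω ⊆ ℝⁿ and Borel g : ∂Ω → ℝ,
Tg(x) = ∫_{S^{n−1}} |g(ζ(x,θ))| dH^{n−1}(θ) ≤ 2ⁿ ∫_{∂Ω} |g(y)||x−y|^{1−n} dH^{n−1}(y)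
for a.e. x ∈ Ω. Here h x θ = |g(ζ(x,θ))| encodes the value of |g| at the first
intersection ζ(x,θ) of the ray {x+tθ : t>0} with ∂Ω, with h x θ = 0 when the ray
never meets ∂Ω. -/
theorem stmt11 {n : ℕ} (hn : 2 ≤ n) (Ω : Set (EuclideanSpace ℝ (Fin n))) (hΩ : IsOpen Ω)
    (g : EuclideanSpace ℝ (Fin n) → ℝ) (hg : Measurable g)
    (h : EuclideanSpace ℝ (Fin n) → EuclideanSpace ℝ (Fin n) → ℝ≥0∞)
    (hray : ∀ x ∈ Ω, ∀ θ ∈ Metric.sphere (0 : EuclideanSpace ℝ (Fin n)) 1,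
      (∃ t : ℝ, 0 < t ∧ x + t • θ ∈ frontier Ω) →
        ∃ t : ℝ, 0 < t ∧ x + t • θ ∈ frontier Ω ∧ (∀ s ∈ Ioo (0:ℝ) t, x + s • θ ∈ Ω) ∧
          h x θ = (‖g (x + t • θ)‖₊ : ℝ≥0∞))
    (hray0 : ∀ x ∈ Ω, ∀ θ ∈ Metric.sphere (0 : EuclideanSpace ℝ (Fin n)) 1,
      (¬ ∃ t : ℝ, 0 < t ∧ x + t • θ ∈ frontier Ω) → h x θ = 0) :
    ∀ᵐ x ∂(volume.restrict Ω),
      (∫⁻ θ in Metric.sphere (0 : EuclideanSpace ℝ (Fin n)) 1, h x θ ∂μH[(n:ℝ) - 1])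
        ≤ 2 ^ n * ∫⁻ y in frontier Ω,
            (‖g y‖₊ : ℝ≥0∞) * edist x y ^ (-((n:ℝ) - 1)) ∂μH[(n:ℝ) - 1] := by
  filter_upwards [ae_restrict_mem hΩ.measurableSet] with x hxΩ
  classical
  set μ : Measure (EuclideanSpace ℝ (Fin n)) := μH[(n:ℝ)-1] with hμ
  set d : ℝ := (n:ℝ) - 1 with hd_def
  set F : Set (EuclideanSpace ℝ (Fin n)) := frontier Ω with hFdef
  have hFc : IsClosed F := isClosed_frontier
  have hFΩ : ∀ y ∈ F, y ∉ Ω := by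
    intro y hy
    rw [hFdef, hΩ.frontier_eq] at hy
    exact hy.2
  have hxF : x ∉ F := fun hf => hFΩ x hf hxΩ
  set S : Set (EuclideanSpace ℝ (Fin n)) := Metric.sphere 0 1 with hSdef
  have hSm : MeasurableSet S := Metric.isClosed_sphere.measurableSet
  set S' : Set (EuclideanSpace ℝ (Fin n)) := {θ | ∃ t : ℝ, 0 < t ∧ x + t • θ ∈ F} with hS'def
  set τ : EuclideanSpace ℝ (Fin n) → ℝ :=
    fun θ => sInf {t : ℝ | 0 < t ∧ x + t • θ ∈ F} with hτdef
  set A : Set (EuclideanSpace ℝ (Fin n)) := S ∩ S' with hAdef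
  -- closedness of finite-time hitting sets
  have hCa : ∀ a : ℝ, IsClosed {θ : EuclideanSpace ℝ (Fin n) | ∃ t ∈ Icc (0:ℝ) a, x + t • θ ∈ F} := by
    intro a
    have heq : {θ : EuclideanSpace ℝ (Fin n) | ∃ t ∈ Icc (0:ℝ) a, x + t • θ ∈ F}
        = Prod.snd '' {p : (Icc (0:ℝ) a) × EuclideanSpace ℝ (Fin n) | x + (p.1 : ℝ) • p.2 ∈ F} := by
      ext θ
      constructor
      · rintro ⟨t, ht, htF⟩
        exact ⟨(⟨t, ht⟩, θ), htF, rfl⟩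
      · rintro ⟨⟨⟨t, ht⟩, θ'⟩, htF, rfl⟩
        exact ⟨t, ht, htF⟩
    rw [heq]
    exact isClosedMap_snd_of_compactSpace _
      (hFc.preimage (continuous_const.add
        ((continuous_subtype_val.comp continuous_fst).smul continuous_snd)))
  have hx0F : ∀ θ : EuclideanSpace ℝ (Fin n), x + (0:ℝ) • θ ∉ F := by
    intro θ; simpa using hxF
  have hS'm : MeasurableSet S' := by
    have heq : S' = ⋃ m : ℕ, {θ : EuclideanSpace ℝ (Fin n) | ∃ t ∈ Icc (0:ℝ) (m:ℝ), x + t • θ ∈ F} := by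
      ext θ
      simp only [hS'def, mem_setOf_eq, mem_iUnion]
      constructor
      · rintro ⟨t, ht, htF⟩
        exact ⟨⌈t⌉₊, t, ⟨ht.le, Nat.le_ceil t⟩, htF⟩
      · rintro ⟨m, t, ⟨ht0, -⟩, htF⟩
        refine ⟨t, lt_of_le_of_ne ht0 ?_, htF⟩
        rintro rfl
        exact hx0F θ htF
    rw [heq]
    exact MeasurableSet.iUnion (fun m => (hCa (m:ℝ)).measurableSet)
  have hAm : MeasurableSet A := hSm.inter hS'm
  have hAS : A ⊆ S := inter_subset_left
  -- key properties of τ on A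
  have hbdd : ∀ θ : EuclideanSpace ℝ (Fin n), BddBelow {t : ℝ | 0 < t ∧ x + t • θ ∈ F} :=
    fun θ => ⟨0, fun t ht => ht.1.le⟩
  have key : ∀ θ ∈ A, 0 < τ θ ∧ x + τ θ • θ ∈ F ∧ h x θ = (‖g (x + τ θ • θ)‖₊ : ℝ≥0∞) := by
    rintro θ ⟨hθS, hθS'⟩
    obtain ⟨t₀, ht0, ht0F, hIoo, hval⟩ := hray x hxΩ θ hθS hθS'
    have hlb : ∀ t' ∈ {t : ℝ | 0 < t ∧ x + t • θ ∈ F}, t₀ ≤ t' := by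
      rintro t' ⟨ht'0, ht'F⟩
      by_contra hlt
      exact hFΩ _ ht'F (hIoo t' ⟨ht'0, not_le.1 hlt⟩)
    have hτeq : τ θ = t₀ :=
      le_antisymm (csInf_le (hbdd θ) ⟨ht0, ht0F⟩) (le_csInf ⟨t₀, ht0, ht0F⟩ hlb)
    rw [hτeq]
    exact ⟨ht0, ht0F, hval⟩
  -- measurable modification of τ
  set τ' : EuclideanSpace ℝ (Fin n) → ℝ := fun θ => if θ ∈ A then τ θ else 1 with hτ'def
  have hτ'm : Measurable τ' := by
    apply measurable_of_Iic
    intro a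
    have heq : τ' ⁻¹' Iic a
        = (A ∩ {θ | ∃ t ∈ Icc (0:ℝ) a, x + t • θ ∈ F})
          ∪ (Aᶜ ∩ (if (1:ℝ) ≤ a then univ else ∅)) := by
      ext θ
      by_cases hθ : θ ∈ A
      · simp only [mem_preimage, mem_Iic, hτ'def, if_pos hθ, mem_union, mem_inter_iff, hθ,
          true_and, mem_compl_iff, not_true_eq_false, false_and, or_false, mem_setOf_eq]
        constructor
        · intro hle
          exact ⟨τ θ, ⟨(key θ hθ).1.le, hle⟩, (key θ hθ).2.1⟩
        · rintro ⟨t, ⟨ht0, hta⟩, htF⟩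
          have ht0' : 0 < t := by
            rcases ht0.lt_or_eq with h' | h'
            · exact h'
            · exact absurd htF (h' ▸ hx0F θ)
          exact le_trans (csInf_le (hbdd θ) ⟨ht0', htF⟩) hta
      · simp only [mem_preimage, mem_Iic, hτ'def, if_neg hθ, mem_union, mem_inter_iff, hθ,
          false_and, false_or, mem_compl_iff, not_false_eq_true, true_and]
        by_cases h1a : (1:ℝ) ≤ a
        · simp [h1a]
        · simp [h1a]
    rw [heq]
    exact (hAm.inter (hCa a).measurableSet).union (hAm.compl.inter (by split_ifs <;> simp))
  set Z : EuclideanSpace ℝ (Fin n) → EuclideanSpace ℝ (Fin n) :=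
    fun θ => x + τ' θ • θ with hZdef
  have hZm : Measurable Z := by
    apply Measurable.add measurable_const
    exact hτ'm.smul measurable_id
  set f : EuclideanSpace ℝ (Fin n) → ℝ≥0∞ := fun y => (‖g y‖₊ : ℝ≥0∞) with hfdef
  have hfm : Measurable f := hg.nnnorm.coe_nnreal_ennreal
  set w : EuclideanSpace ℝ (Fin n) → ℝ≥0∞ := fun y => edist x y ^ (-d) with hwdef
  have hwm : Measurable w := by fun_prop
  -- rewrite the spherical integral
  have hcongr : ∀ θ ∈ S, h x θ = A.indicator (fun θ => f (Z θ)) θ := by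
    intro θ hθS
    by_cases hθS' : θ ∈ S'
    · have hθA : θ ∈ A := ⟨hθS, hθS'⟩
      rw [indicator_of_mem hθA]
      have hZθ : Z θ = x + τ θ • θ := by rw [hZdef]; simp only [hτ'def, if_pos hθA]
      rw [hZθ]
      exact (key θ hθA).2.2
    · rw [indicator_of_notMem (fun hA' => hθS' hA'.2)]
      exact hray0 x hxΩ θ hθS hθS'
  -- the pushforward measure comparison
  set ρ : Measure (EuclideanSpace ℝ (Fin n)) :=
    (2 ^ n : ℝ≥0∞) • ((μ.restrict F).withDensity w) with hρdef
  have hνρ : Measure.map Z (μ.restrict A) ≤ ρ := by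
    rw [Measure.le_iff]
    intro s hs
    rw [Measure.map_apply hZm hs, Measure.restrict_apply (hZm hs)]
    have hsub : Z ⁻¹' s ∩ A ⊆ (fun y => ‖y - x‖⁻¹ • (y - x)) '' (s ∩ F) := by
      rintro θ ⟨hθs, hθA⟩
      obtain ⟨hτpos, hτF, -⟩ := key θ hθA
      have hZθ : Z θ = x + τ θ • θ := by rw [hZdef]; simp only [hτ'def, if_pos hθA]
      refine ⟨Z θ, ⟨by rwa [← mem_preimage], by rwa [hZθ]⟩, ?_⟩
      have hθnorm : ‖θ‖ = 1 := by
        have := hθA.1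
        rw [hSdef, mem_sphere_iff_norm, sub_zero] at this
        exact this
      rw [hZθ]
      simp only [add_sub_cancel_left]
      rw [norm_smul, Real.norm_eq_abs, abs_of_pos hτpos, hθnorm, mul_one, smul_smul,
        inv_mul_cancel₀ hτpos.ne', one_smul]
    calc μ (Z ⁻¹' s ∩ A) ≤ μ ((fun y => ‖y - x‖⁻¹ • (y - x)) '' (s ∩ F)) := measure_mono hsub
      _ ≤ 2 ^ n * ∫⁻ y in s ∩ F, edist x y ^ (-((n:ℝ)-1)) ∂μ :=
          proj_bound11 hn x (s ∩ F) (hs.inter hFc.measurableSet) (fun hmem => hxF hmem.2)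
      _ = ρ s := by
          rw [hρdef, Measure.smul_apply, smul_eq_mul, withDensity_apply _ hs,
            Measure.restrict_restrict hs]
  calc (∫⁻ θ in S, h x θ ∂μ)
      = ∫⁻ θ in S, A.indicator (fun θ => f (Z θ)) θ ∂μ :=
        setLIntegral_congr_fun hSm (fun θ hθ => hcongr θ hθ)
    _ = ∫⁻ θ in A, f (Z θ) ∂(μ.restrict S) := lintegral_indicator hAm _
    _ = ∫⁻ θ in A, f (Z θ) ∂μ := by
        rw [Measure.restrict_restrict hAm, inter_eq_self_of_subset_left hAS]
    _ = ∫⁻ y, f y ∂(Measure.map Z (μ.restrict A)) := (lintegral_map hfm hZm).symm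
    _ ≤ ∫⁻ y, f y ∂ρ := lintegral_mono' hνρ le_rfl
    _ = 2 ^ n * ∫⁻ y, f y ∂((μ.restrict F).withDensity w) := by
        rw [hρdef, lintegral_smul_measure, smul_eq_mul]
    _ = 2 ^ n * ∫⁻ y in F, w y * f y ∂μ := by
        rw [lintegral_withDensity_eq_lintegral_mul _ hwm hfm]; rfl
    _ = 2 ^ n * ∫⁻ y in F, f y * w y ∂μ := by
        congr 1
        exact lintegral_congr (fun y => mul_comm _ _)
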